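/- Let S = X₁ + ... + X_n where X₁,...,X_n are independent nonnegative random variables with E[S] > 0. Choose an index I ∈ {1,...,n} independently of everything else with P(I = i) = E[X_i]/E[S]. Then the size-bias transform of S is distributed as X₁ + ... + X_n + X_I^s − X_I, where X_I^s denotes an independent size-bias of the chosen summand. -/

import Mathlib

/-- Convolution of two mass functions on ℕ (distribution of an independent sum). -/
def convPMF (f g : ℕ → ℝ) : ℕ → ℝ :=
  fun k => ∑ j ∈ Finset.range (k + 1), f j * g (k - j)

/-- Point mass at `0`. -/
def deltaPMF : ℕ → ℝ := fun k => if k = 0 then 1 else 0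

/-- Distribution of the independent sum of a list of ℕ-valued distributions. -/
def convList : List (ℕ → ℝ) → (ℕ → ℝ)
  | [] => deltaPMF
  | f :: fs => convPMF f (convList fs)

/-- Mean of a distribution on ℕ. -/
noncomputable def meanPMF (P : ℕ → ℝ) : ℝ := ∑' n : ℕ, (n : ℝ) * P n

/-- The mass function of the size-bias transform of a distribution `P` on ℕ. -/
noncomputable def sizeBiasPMF (P : ℕ → ℝ) : ℕ → ℝ :=
  fun k => (k : ℝ) * P k / meanPMF P

lemma convPMF_eq_coeff (f g : ℕ → ℝ) (k : ℕ) :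
    convPMF f g k = PowerSeries.coeff k (PowerSeries.mk f * PowerSeries.mk g) := by
  rw [PowerSeries.coeff_mul, Finset.Nat.sum_antidiagonal_eq_sum_range_succ_mk]
  simp [convPMF]

lemma mk_convPMF (f g : ℕ → ℝ) :
    PowerSeries.mk (convPMF f g) = PowerSeries.mk f * PowerSeries.mk g := by
  ext k
  rw [PowerSeries.coeff_mk, convPMF_eq_coeff]

lemma convPMF_comm (f g : ℕ → ℝ) : convPMF f g = convPMF g f := by
  funext k
  rw [convPMF_eq_coeff, convPMF_eq_coeff, mul_comm]

lemma convPMF_assoc (f g h : ℕ → ℝ) :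
    convPMF (convPMF f g) h = convPMF f (convPMF g h) := by
  funext k
  rw [convPMF_eq_coeff, convPMF_eq_coeff, mk_convPMF, mk_convPMF, mul_assoc]

lemma convPMF_add_right (f g h : ℕ → ℝ) :
    convPMF f (fun m => g m + h m) = fun k => convPMF f g k + convPMF f h k := by
  funext k
  simp [convPMF, mul_add, Finset.sum_add_distrib]

lemma convPMF_sum_right {ι : Type*} (s : Finset ι) (f : ℕ → ℝ) (g : ι → ℕ → ℝ) (k : ℕ) :
    convPMF f (fun m => ∑ i ∈ s, g i m) k = ∑ i ∈ s, convPMF f (g i) k := by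
  simp [convPMF, Finset.mul_sum]
  rw [Finset.sum_comm]

lemma convPMF_mul_right (f g : ℕ → ℝ) (c : ℝ) (k : ℕ) :
    convPMF f (fun m => c * g m) k = c * convPMF f g k := by
  simp only [convPMF, Finset.mul_sum]
  exact Finset.sum_congr rfl fun j _ => by ring

/-- derivation-type identity for the weight `k`. -/
lemma weight_conv (f g : ℕ → ℝ) (k : ℕ) :
    (k : ℝ) * convPMF f g k
      = convPMF (fun j => (j : ℝ) * f j) g k + convPMF f (fun m => (m : ℝ) * g m) k := by
  simp only [convPMF, Finset.mul_sum, ← Finset.sum_add_distrib]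
  refine Finset.sum_congr rfl fun j hj => ?_
  have hjk : j ≤ k := Nat.lt_succ_iff.mp (Finset.mem_range.mp hj)
  have : ((k - j : ℕ) : ℝ) = (k : ℝ) - j := by
    rw [Nat.cast_sub hjk]
  rw [this]; ring

/-- The key algebraic identity. -/
lemma key (Ps : List (ℕ → ℝ)) (k : ℕ) :
    (k : ℝ) * convList Ps k
      = ∑ i : Fin Ps.length,
          convPMF (convList (Ps.eraseIdx i)) (fun m => (m : ℝ) * Ps.get i m) k := by
  induction Ps generalizing k with
  | nil =>
      simp only [convList, List.length_nil, Finset.univ_eq_empty, Finset.sum_empty, deltaPMF]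
      rcases Nat.eq_zero_or_pos k with h | h
      · simp [h]
      · simp [Nat.pos_iff_ne_zero.mp h]
  | cons P Ps ih =>
      have hT : (fun m : ℕ => (m : ℝ) * convList Ps m)
          = fun m : ℕ => ∑ i : Fin Ps.length,
              convPMF (convList (Ps.eraseIdx i)) (fun r => (r : ℝ) * Ps.get i r) m := by
        funext m; exact ih m
      calc (k : ℝ) * convList (P :: Ps) k
          = convPMF (fun j => (j : ℝ) * P j) (convList Ps) k
            + convPMF P (fun m => (m : ℝ) * convList Ps m) k := weight_conv _ _ k
        _ = convPMF (convList Ps) (fun j => (j : ℝ) * P j) k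
            + ∑ i : Fin Ps.length,
                convPMF (convPMF P (convList (Ps.eraseIdx i)))
                  (fun m => (m : ℝ) * Ps.get i m) k := by
            rw [convPMF_comm, hT, convPMF_sum_right]
            congr 1
            exact Finset.sum_congr rfl fun i _ => by rw [convPMF_assoc]
        _ = _ := by
            rw [show ∑ i : Fin (P :: Ps).length,
                  convPMF (convList ((P :: Ps).eraseIdx i)) (fun m => (m : ℝ) * (P :: Ps).get i m) k
                = ∑ i : Fin (Ps.length + 1),
                  convPMF (convList ((P :: Ps).eraseIdx i)) (fun m => (m : ℝ) * (P :: Ps).get i m) k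
                from rfl, Fin.sum_univ_succ]
            rfl

lemma summable_of_tsum_one {P : ℕ → ℝ} (h : ∑' n, P n = 1) : Summable P := by
  by_contra hc
  rw [tsum_eq_zero_of_not_summable hc] at h
  norm_num at h

lemma norm_summable_of_nonneg {P : ℕ → ℝ} (h0 : ∀ n, 0 ≤ P n) (hS : Summable P) :
    Summable fun n => ‖P n‖ := by
  refine hS.congr fun n => ?_
  rw [Real.norm_of_nonneg (h0 n)]

/-- bundled properties preserved by convolution. -/
lemma conv_props {f g : ℕ → ℝ}
    (hf0 : ∀ n, 0 ≤ f n) (hf1 : ∑' n, f n = 1) (hfm : Summable fun n : ℕ => (n : ℝ) * f n)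
    (hg0 : ∀ n, 0 ≤ g n) (hg1 : ∑' n, g n = 1) (hgm : Summable fun n : ℕ => (n : ℝ) * g n) :
    (∀ n, 0 ≤ convPMF f g n) ∧ (∑' n, convPMF f g n = 1)
      ∧ (Summable fun n : ℕ => (n : ℝ) * convPMF f g n)
      ∧ meanPMF (convPMF f g) = meanPMF f + meanPMF g := by
  have hfS := summable_of_tsum_one hf1
  have hgS := summable_of_tsum_one hg1
  have hfn := norm_summable_of_nonneg hf0 hfS
  have hgn := norm_summable_of_nonneg hg0 hgS
  have hfmn := norm_summable_of_nonneg (fun n => mul_nonneg (Nat.cast_nonneg n) (hf0 n)) hfm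
  have hgmn := norm_summable_of_nonneg (fun n => mul_nonneg (Nat.cast_nonneg n) (hg0 n)) hgm
  have hnonneg : ∀ n, 0 ≤ convPMF f g n := fun n =>
    Finset.sum_nonneg fun j _ => mul_nonneg (hf0 j) (hg0 _)
  have htsum : ∑' n, convPMF f g n = 1 := by
    have := tsum_mul_tsum_eq_tsum_sum_range_of_summable_norm hfn hgn
    rw [hf1, hg1] at this
    simpa [convPMF] using this.symm
  have hS1 : Summable fun n : ℕ => convPMF (fun j => (j : ℝ) * f j) g n := by
    have := summable_norm_sum_mul_range_of_summable_norm hfmn hgn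
    exact this.of_norm.congr fun n => rfl
  have hS2 : Summable fun n : ℕ => convPMF f (fun m => (m : ℝ) * g m) n := by
    have := summable_norm_sum_mul_range_of_summable_norm hfn hgmn
    exact this.of_norm.congr fun n => rfl
  have hT1 : ∑' n, convPMF (fun j => (j : ℝ) * f j) g n = meanPMF f := by
    have := tsum_mul_tsum_eq_tsum_sum_range_of_summable_norm hfmn hgn
    rw [hg1] at this
    simpa [convPMF, meanPMF] using this.symm
  have hT2 : ∑' n, convPMF f (fun m => (m : ℝ) * g m) n = meanPMF g := by
    have := tsum_mul_tsum_eq_tsum_sum_range_of_summable_norm hfn hgmn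
    rw [hf1] at this
    simpa [convPMF, meanPMF] using this.symm
  have hmeq : (fun n : ℕ => (n : ℝ) * convPMF f g n)
      = fun n => convPMF (fun j => (j : ℝ) * f j) g n + convPMF f (fun m => (m : ℝ) * g m) n :=
    funext fun n => weight_conv f g n
  refine ⟨hnonneg, htsum, ?_, ?_⟩
  · rw [hmeq]; exact hS1.add hS2
  · rw [meanPMF, hmeq, Summable.tsum_add hS1 hS2, hT1, hT2]

lemma convList_props (Ps : List (ℕ → ℝ))
    (hnonneg : ∀ P ∈ Ps, ∀ n, 0 ≤ P n)
    (hsum : ∀ P ∈ Ps, ∑' n, P n = 1)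
    (hmean : ∀ P ∈ Ps, Summable (fun n : ℕ => (n : ℝ) * P n)) :
    (∀ n, 0 ≤ convList Ps n) ∧ (∑' n, convList Ps n = 1)
      ∧ (Summable fun n : ℕ => (n : ℝ) * convList Ps n)
      ∧ meanPMF (convList Ps) = ∑ i : Fin Ps.length, meanPMF (Ps.get i) := by
  induction Ps with
  | nil =>
      refine ⟨fun n => by by_cases h : n = 0 <;> simp [convList, deltaPMF, h], ?_, ?_, ?_⟩
      · have : ∑' n, convList [] n = ∑' n : ℕ, (if n = 0 then (1:ℝ) else 0) := rfl
        rw [this, tsum_eq_single 0 (fun b hb => by simp [hb])]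
        simp
      · refine summable_of_ne_finset_zero (s := {0}) fun n hn => ?_
        have : n ≠ 0 := by simpa using hn
        simp [convList, deltaPMF, this]
      · have : (fun n : ℕ => (n : ℝ) * convList [] n) = fun _ => 0 := by
          funext n
          by_cases h : n = 0 <;> simp [convList, deltaPMF, h]
        simp [meanPMF, this]
  | cons P Ps ih =>
      have h0 := hnonneg P (List.mem_cons_self)
      have h1 := hsum P (List.mem_cons_self)
      have h2 := hmean P (List.mem_cons_self)
      obtain ⟨c0, c1, c2, c3⟩ := ih (fun Q hQ => hnonneg Q (List.mem_cons_of_mem _ hQ))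
        (fun Q hQ => hsum Q (List.mem_cons_of_mem _ hQ))
        (fun Q hQ => hmean Q (List.mem_cons_of_mem _ hQ))
      obtain ⟨d0, d1, d2, d3⟩ := conv_props h0 h1 h2 c0 c1 c2
      refine ⟨d0, d1, d2, ?_⟩
      show meanPMF (convPMF P (convList Ps)) = _
      rw [d3, c3,
        show ∑ i : Fin (P :: Ps).length, meanPMF ((P :: Ps).get i)
            = ∑ i : Fin (Ps.length + 1), meanPMF ((P :: Ps).get i) from rfl,
        Fin.sum_univ_succ]
      rfl

/-- Let `S = X₁ + ⋯ + X_n` with `X₁, …, X_n` independent nonnegative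
(integer-valued) random variables and `E[S] > 0`.  Choosing an index `I` with
`P(I = i) = E[X_i]/E[S]`, the size-bias transform of `S` is distributed as
`X₁ + ⋯ + X_n + X_I^s − X_I`, i.e. as the mixture over `i` of the independent sum of
`X_j, j ≠ i`, with an independent size-bias `X_i^s`. -/
theorem stmt5 (Ps : List (ℕ → ℝ))
    (hnonneg : ∀ P ∈ Ps, ∀ n, 0 ≤ P n)
    (hsum : ∀ P ∈ Ps, ∑' n, P n = 1)
    (hmean : ∀ P ∈ Ps, Summable (fun n : ℕ => (n : ℝ) * P n))
    (hpos : 0 < ∑ i : Fin Ps.length, meanPMF (Ps.get i)) :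
    ∀ k : ℕ,
      sizeBiasPMF (convList Ps) k
        = ∑ i : Fin Ps.length,
            (meanPMF (Ps.get i) / ∑ j : Fin Ps.length, meanPMF (Ps.get j)) *
              convPMF (convList (Ps.eraseIdx i)) (sizeBiasPMF (Ps.get i)) k := by
  intro k
  obtain ⟨e0, e1, e2, e3⟩ := convList_props Ps hnonneg hsum hmean
  have hsb : sizeBiasPMF (convList Ps) k
      = ((k : ℝ) * convList Ps k) / ∑ j : Fin Ps.length, meanPMF (Ps.get j) := by
    rw [sizeBiasPMF, e3]
  rw [hsb, key Ps k, Finset.sum_div]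
  refine Finset.sum_congr rfl fun i _ => ?_
  have hiP : Ps.get i ∈ Ps := Ps.get_mem i
  have h0 := hnonneg _ hiP
  have h2 := hmean _ hiP
  have hconv : convPMF (convList (Ps.eraseIdx i)) (fun m => (m : ℝ) * Ps.get i m) k
      = meanPMF (Ps.get i) * convPMF (convList (Ps.eraseIdx i)) (sizeBiasPMF (Ps.get i)) k := by
    by_cases hμ : meanPMF (Ps.get i) = 0
    · have hz : ∀ m : ℕ, (m : ℝ) * Ps.get i m = 0 := by
        intro m
        have hle : (m : ℝ) * Ps.get i m ≤ ∑' n : ℕ, (n : ℝ) * Ps.get i n :=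
          Summable.le_tsum h2 m fun j _ => mul_nonneg (Nat.cast_nonneg j) (h0 j)
        have : (m : ℝ) * Ps.get i m ≤ 0 := hle.trans_eq hμ
        exact le_antisymm this (mul_nonneg (Nat.cast_nonneg m) (h0 m))
      have hz' : (fun m : ℕ => (m : ℝ) * Ps.get i m) = fun _ => (0 : ℝ) := funext hz
      have hsbz : sizeBiasPMF (Ps.get i) = fun _ => (0 : ℝ) := by
        funext m
        rw [sizeBiasPMF, hz m, zero_div]
      rw [hz', hsbz, hμ]
      simp [convPMF]
    · have hsbe : sizeBiasPMF (Ps.get i)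
          = fun m : ℕ => (meanPMF (Ps.get i))⁻¹ * ((m : ℝ) * Ps.get i m) := by
        funext m
        rw [sizeBiasPMF, div_eq_inv_mul]
      rw [hsbe, convPMF_mul_right, ← mul_assoc, mul_inv_cancel₀ hμ, one_mul]
  rw [hconv]
  ring
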